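/- Let f ∈ ℤ[X] with 0 < |f(a)| < |f(b)| for integers a, b, let k ≥ 1, and let q_k be as defined via admissible divisors. If q_k > 1, f has no rational roots, and every complex root θ of f satisfies |b − θ| > √(q_k)·|a − θ|, then f is a product of at most k irreducible factors over ℚ. -/

import Mathlib

open Polynomial Real
open scoped nonZeroDivisors

noncomputable section

/-- `d` is an admissible divisor of `f(a)`. -/
def AdmDiv (f : Polynomial ℤ) (a d : ℤ) : Prop :=
  d ∣ f.eval a ∧
    Int.gcd d (f.eval a / d) ∣ Int.gcd (f.eval a) (f.derivative.eval a)

/-- `d` is a unitary divisor of `N`. -/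
def UnitDiv (N d : ℤ) : Prop := d ∣ N ∧ Int.gcd d (N / d) = 1

/-- `f` is a product of at most `k` nonconstant irreducible factors over `ℚ`
(counting multiplicities): it cannot be written as a product of `k + 1`
nonconstant polynomials over `ℚ`. -/
def FactorsAtMost (f : Polynomial ℤ) (k : ℕ) : Prop :=
  ∀ g : Fin (k + 1) → Polynomial ℚ, (∀ i, 0 < (g i).natDegree) →
    f.map (Int.castRingHom ℚ) ≠ ∏ i, g i

/-- `q` is the quantity `q_k` of the paper: the greatest ratio `d₂/d₁` of
admissible divisors of `f(b)` and `f(a)` not exceeding `(|f(b)|/|f(a)|)^(1/(k+1))`. -/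
def IsQk (f : Polynomial ℤ) (a b : ℤ) (k : ℕ) (q : ℝ) : Prop :=
  IsGreatest {x : ℝ | ∃ d₁ d₂ : ℤ, AdmDiv f a d₁ ∧ AdmDiv f b d₂ ∧
    x = (d₂ : ℝ) / (d₁ : ℝ) ∧
    x ≤ (|((f.eval b : ℤ) : ℝ)| / |((f.eval a : ℤ) : ℝ)|) ^ ((k + 1 : ℝ))⁻¹} q

/-- `q` is the quantity `q^u_k` of the paper, defined via unitary divisors. -/
def IsQuk (f : Polynomial ℤ) (a b : ℤ) (k : ℕ) (q : ℝ) : Prop :=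
  IsGreatest {x : ℝ | ∃ d₁ d₂ : ℤ, UnitDiv (f.eval a) d₁ ∧ UnitDiv (f.eval b) d₂ ∧
    x = (d₂ : ℝ) / (d₁ : ℝ) ∧
    x ≤ (|((f.eval b : ℤ) : ℝ)| / |((f.eval a : ℤ) : ℝ)|) ^ ((k + 1 : ℝ))⁻¹} q

lemma multiset_prod_le {s : Multiset ℂ} {u v : ℂ → ℝ}
    (h : ∀ θ ∈ s, 0 ≤ u θ ∧ u θ ≤ v θ) :
    (s.map u).prod ≤ (s.map v).prod := by
  induction s using Multiset.induction_on with
  | empty => simp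
  | cons a s ih =>
    simp only [Multiset.map_cons, Multiset.prod_cons]
    have ha := h a (Multiset.mem_cons_self a s)
    have hs : ∀ θ ∈ s, 0 ≤ u θ ∧ u θ ≤ v θ := fun θ hθ => h θ (Multiset.mem_cons_of_mem hθ)
    have hPu : 0 ≤ (s.map u).prod :=
      Multiset.prod_nonneg fun x hx => by
        obtain ⟨θ, hθ, rfl⟩ := Multiset.mem_map.mp hx
        exact (hs θ hθ).1
    exact mul_le_mul ha.2 (ih hs) hPu (le_trans ha.1 ha.2)

lemma multiset_prod_lt {s : Multiset ℂ} (hs : s ≠ 0) {u v : ℂ → ℝ}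
    (h : ∀ θ ∈ s, 0 ≤ u θ ∧ u θ < v θ) :
    (s.map u).prod < (s.map v).prod := by
  obtain ⟨a, ha⟩ := Multiset.exists_mem_of_ne_zero hs
  obtain ⟨t, rfl⟩ : ∃ t, s = a ::ₘ t := ⟨s.erase a, (Multiset.cons_erase ha).symm⟩
  simp only [Multiset.map_cons, Multiset.prod_cons]
  have hha := h a (Multiset.mem_cons_self a t)
  have hts : ∀ θ ∈ t, 0 ≤ u θ ∧ u θ ≤ v θ :=
    fun θ hθ => ⟨(h θ (Multiset.mem_cons_of_mem hθ)).1, le_of_lt (h θ (Multiset.mem_cons_of_mem hθ)).2⟩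
  have hPu : 0 ≤ (t.map u).prod :=
    Multiset.prod_nonneg fun x hx => by
      obtain ⟨θ, hθ, rfl⟩ := Multiset.mem_map.mp hx
      exact (hts θ hθ).1
  have hPv : 0 < (t.map v).prod :=
    Multiset.prod_pos fun x hx => by
      obtain ⟨θ, hθ, rfl⟩ := Multiset.mem_map.mp hx
      exact lt_of_le_of_lt (h θ (Multiset.mem_cons_of_mem hθ)).1
        (h θ (Multiset.mem_cons_of_mem hθ)).2
  calc u a * (t.map u).prod ≤ u a * (t.map v).prod := by
        exact mul_le_mul_of_nonneg_left (multiset_prod_le hts) hha.1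
    _ < v a * (t.map v).prod := by exact mul_lt_mul_of_pos_right hha.2 hPv

lemma pigeonhole {n : ℕ} (hn : n ≠ 0) (r : Fin n → ℝ) (hr : ∀ i, 0 < r i) :
    ∃ j, r j ≤ (∏ i, r i) ^ ((n : ℝ))⁻¹ := by
  obtain ⟨j, -, hj⟩ := Finset.exists_min_image Finset.univ r ⟨⟨0, Nat.pos_of_ne_zero hn⟩, Finset.mem_univ _⟩
  refine ⟨j, ?_⟩
  have h1 : r j ^ n ≤ ∏ i, r i := by
    calc r j ^ n = ∏ _i : Fin n, r j := by simp
    _ ≤ ∏ i, r i := Finset.prod_le_prod (fun i _ => le_of_lt (hr j)) (fun i _ => hj i (Finset.mem_univ i))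
  have h2 : ((r j ^ n) : ℝ) ^ ((n : ℝ))⁻¹ ≤ (∏ i, r i) ^ ((n : ℝ))⁻¹ :=
    Real.rpow_le_rpow (pow_nonneg (le_of_lt (hr j)) n) h1 (by positivity)

  rwa [Real.pow_rpow_inv_natCast (le_of_lt (hr j)) hn] at h2

lemma admDiv_of_factor (f G H : Polynomial ℤ) (a : ℤ) (hf : f = G * H)
    (ha : f.eval a ≠ 0) : AdmDiv f a (G.eval a) := by
  have heval : f.eval a = G.eval a * H.eval a := by rw [hf, eval_mul]
  have hG0 : G.eval a ≠ 0 := fun h => ha (by rw [heval, h, zero_mul])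
  constructor
  · exact ⟨H.eval a, heval⟩
  · have hdivq : f.eval a / G.eval a = H.eval a := by
      rw [heval, Int.mul_ediv_cancel_left _ hG0]
    rw [hdivq]
    have hd : (Int.gcd (G.eval a) (H.eval a) : ℤ) ∣ f.eval a := by
      exact dvd_trans (Int.gcd_dvd_left _ _) ⟨H.eval a, heval⟩
    have hd' : (Int.gcd (G.eval a) (H.eval a) : ℤ) ∣ f.derivative.eval a := by
      have : f.derivative = G.derivative * H + G * H.derivative := by
        rw [hf, derivative_mul]
      rw [this, eval_add, eval_mul, eval_mul]
      exact dvd_add (Dvd.dvd.mul_left (Int.gcd_dvd_right _ _) _)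
        (Dvd.dvd.mul_right (Int.gcd_dvd_left _ _) _)
    exact Int.natCast_dvd_natCast.mp (Int.dvd_coe_gcd hd hd')

lemma admDiv_abs (f G H : Polynomial ℤ) (a : ℤ) (hf : f = G * H)
    (ha : f.eval a ≠ 0) : AdmDiv f a |G.eval a| := by
  rcases abs_cases (G.eval a) with ⟨h1, _⟩ | ⟨h1, _⟩
  · rw [h1]; exact admDiv_of_factor f G H a hf ha
  · rw [h1]
    have : (-G).eval a = -(G.eval a) := by simp
    rw [← this]
    exact admDiv_of_factor f (-G) (-H) a (by rw [hf]; ring) ha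

lemma content_prod {ι : Type*} (s : Finset ι) (p : ι → Polynomial ℤ) :
    (∏ i ∈ s, p i).content = ∏ i ∈ s, (p i).content := by
  classical
  induction s using Finset.induction_on with
  | empty => simp
  | insert x s hx ih =>
    rw [Finset.prod_insert hx, Finset.prod_insert hx, content_mul, ih]

lemma int_factorization {n : ℕ} (hn : n ≠ 0) (f : Polynomial ℤ) (hf : f ≠ 0)
    (g : Fin n → Polynomial ℚ) (hg : ∀ i, 0 < (g i).natDegree)
    (heq : f.map (Int.castRingHom ℚ) = ∏ i, g i) :
    ∃ G : Fin n → Polynomial ℤ, f = ∏ i, G i ∧ ∀ i, (G i).natDegree = (g i).natDegree := by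
  classical
  -- integer normalizations
  have hmap : ∀ i, ∃ b : ℤ⁰, ((IsLocalization.integerNormalization ℤ⁰ (g i)).map
      (algebraMap ℤ ℚ) = ((b : ℤ)) • (g i)) :=
    fun i => IsLocalization.integerNormalization_map_to_map ℤ⁰ (g i)
  choose c hc using hmap
  set N : Fin n → Polynomial ℤ := fun i => IsLocalization.integerNormalization ℤ⁰ (g i) with hN
  have hc0 : ∀ i, ((c i : ℤ)) ≠ 0 := fun i => nonZeroDivisors.coe_ne_zero _
  have hNdeg : ∀ i, (N i).natDegree = (g i).natDegree := by
    intro i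
    have h1 : ((N i).map (algebraMap ℤ ℚ)).natDegree = (N i).natDegree :=
      natDegree_map_eq_of_injective (algebraMap ℤ ℚ).injective_int _
    rw [← h1, hc i]
    have : ((c i : ℤ)) • (g i) = C ((c i : ℤ) : ℚ) * g i := by
      rw [← Int.cast_smul_eq_zsmul ℚ, smul_eq_C_mul]
    rw [this, natDegree_C_mul (by exact_mod_cast hc0 i)]
  have hg0 : ∀ i, g i ≠ 0 := fun i => fun h => by simpa [h] using hg i
  have hN0 : ∀ i, N i ≠ 0 := by
    intro i h
    apply hg0 i
    have hci := hc i
    change (N i).map _ = _ at hci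
    rw [h, Polynomial.map_zero] at hci
    have h2 := hci.symm
    rw [← Int.cast_smul_eq_zsmul ℚ, smul_eq_C_mul] at h2
    rcases mul_eq_zero.mp h2 with h3 | h3
    · exact absurd (by simpa using h3 : ((c i : ℤ) : ℚ) = 0) (by exact_mod_cast hc0 i)
    · exact h3
  -- C (∏ c) * f = ∏ N
  set cc : ℤ := ∏ i, (c i : ℤ) with hcc
  have hcc0 : cc ≠ 0 := Finset.prod_ne_zero_iff.mpr fun i _ => hc0 i
  have hkey : C cc * f = ∏ i, N i := by
    apply map_injective (Int.castRingHom ℚ) Int.cast_injective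
    rw [Polynomial.map_mul, Polynomial.map_prod, Polynomial.map_C]
    have : ∀ i, (N i).map (Int.castRingHom ℚ) = C ((c i : ℤ) : ℚ) * g i := by
      intro i
      have h1 := hc i
      rw [algebraMap_int_eq] at h1
      rw [h1, ← Int.cast_smul_eq_zsmul ℚ, smul_eq_C_mul]
    simp only [this]
    rw [Finset.prod_mul_distrib, ← map_prod (C : ℚ →+* _), heq]
    congr 2
    show ((cc : ℤ) : ℚ) = ∏ x, ((c x : ℤ) : ℚ)
    rw [hcc]
    push_cast
    rfl
  -- contents
  set P : Fin n → Polynomial ℤ := fun i => (N i).primPart with hP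
  have hNsplit : ∀ i, N i = C ((N i).content) * P i := fun i => (N i).eq_C_content_mul_primPart
  have hprodN : ∏ i, N i = C (∏ i, (N i).content) * ∏ i, P i := by
    calc ∏ i, N i = ∏ i, (C ((N i).content) * P i) := Finset.prod_congr rfl fun i _ => hNsplit i
      _ = (∏ i, C ((N i).content)) * ∏ i, P i := Finset.prod_mul_distrib
      _ = C (∏ i, (N i).content) * ∏ i, P i := by rw [← map_prod (C : ℤ →+* _)]
  set M : ℤ := ∏ i, (N i).content with hM
  -- cc ∣ M
  have hcontent : normalize cc * f.content = M := by
    have h1 : (C cc * f).content = (∏ i, N i).content := by rw [hkey]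
    rw [content_C_mul] at h1
    rw [h1]
    exact content_prod Finset.univ N
  have hccM : cc ∣ M := by
    rw [← hcontent]
    exact dvd_mul_of_dvd_left (associated_normalize cc).dvd _
  obtain ⟨t, ht⟩ := hccM
  have hfP : f = C t * ∏ i, P i := by
    have h3 : C cc * f = C cc * (C t * ∏ i, P i) := by
      rw [hkey, hprodN, ht, map_mul]
      ring
    exact mul_left_cancel₀ (fun h => hcc0 (by simpa using h : cc = 0)) h3
  have ht0 : t ≠ 0 := fun h => hf (by rw [hfP, h, map_zero, zero_mul])
  set i0 : Fin n := ⟨0, Nat.pos_of_ne_zero hn⟩ with hi0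
  refine ⟨fun i => (if i = i0 then C t else 1) * P i, ?_, ?_⟩
  · rw [Finset.prod_mul_distrib, Finset.prod_ite_eq' Finset.univ i0 (fun _ => C t),
      if_pos (Finset.mem_univ i0), ← hfP]
  · intro i
    have hPdeg : (P i).natDegree = (g i).natDegree := by
      rw [hP]
      simp only []
      rw [natDegree_primPart, hNdeg i]
    simp only []
    by_cases hii : i = i0
    · rw [if_pos hii, natDegree_C_mul ht0, hPdeg]
    · rw [if_neg hii, one_mul, hPdeg]

lemma abs_eval_eq (G : Polynomial ℤ) (hG0 : G ≠ 0) (x : ℤ) :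
    |((G.eval x : ℤ) : ℝ)| = ‖(G.map (Int.castRingHom ℂ)).leadingCoeff‖ *
      (((G.map (Int.castRingHom ℂ)).roots.map
        (fun θ => ‖(x : ℂ) - θ‖)).prod) := by
  set Gc := G.map (Int.castRingHom ℂ) with hGc
  have hsplit : Gc.Splits := IsAlgClosed.splits Gc
  have hfact := hsplit.eq_prod_roots
  have heval : ((G.eval x : ℤ) : ℂ) = Gc.eval (x : ℂ) := by
    rw [hGc, eval_intCast_map]; rfl
  have : |((G.eval x : ℤ) : ℝ)| = ‖((G.eval x : ℤ) : ℂ)‖ := by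
    rw [Complex.norm_intCast]
  rw [this, heval]
  conv_lhs => rw [hfact]
  rw [eval_mul, eval_C, norm_mul, eval_multiset_prod, Multiset.map_map]
  congr 1
  rw [show ∀ s : Multiset ℂ, ‖s.prod‖ = (s.map (‖·‖)).prod from
    fun s => map_multiset_prod (normHom : ℂ →*₀ ℝ) s, Multiset.map_map]
  congr 1
  ext θ
  simp

lemma root_bound (f G : Polynomial ℤ) (a b : ℤ) (q : ℝ) (hq1 : 1 < q)
    (hdvd : G ∣ f) (hG2 : 2 ≤ G.natDegree)
    (hroots : ∀ θ : ℂ, aeval θ f = 0 →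
      Real.sqrt q * ‖(a : ℂ) - θ‖ < ‖(b : ℂ) - θ‖) :
    q * |((G.eval a : ℤ) : ℝ)| < |((G.eval b : ℤ) : ℝ)| := by
  have hG0 : G ≠ 0 := fun h => by simp [h] at hG2
  set Gc := G.map (Int.castRingHom ℂ) with hGc
  have hGc0 : Gc ≠ 0 := by
    rw [hGc, Ne, Polynomial.map_eq_zero_iff (Int.cast_injective)]
    exact hG0
  have hsplit : Gc.Splits := IsAlgClosed.splits Gc
  have hcard : Gc.roots.card = G.natDegree := by
    rw [splits_iff_card_roots.mp hsplit, hGc,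
      natDegree_map_eq_of_injective Int.cast_injective]
  have hs0 : Gc.roots ≠ 0 := by
    intro h
    rw [h] at hcard
    simp at hcard
    omega
  have hmem : ∀ θ ∈ Gc.roots, aeval θ f = 0 := by
    intro θ hθ
    have h1 : Gc.eval θ = 0 := (mem_roots hGc0).mp hθ
    have h2 : Gc ∣ f.map (Int.castRingHom ℂ) := Polynomial.map_dvd _ hdvd
    obtain ⟨u, hu⟩ := h2
    rw [aeval_def, eval₂_eq_eval_map, algebraMap_int_eq, hu, eval_mul, h1, zero_mul]
  have hlt := multiset_prod_lt hs0 (u := fun θ => Real.sqrt q * ‖(a : ℂ) - θ‖)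
    (v := fun θ => ‖(b : ℂ) - θ‖)
    (fun θ hθ => ⟨mul_nonneg (Real.sqrt_nonneg q) (norm_nonneg _),
      hroots θ (hmem θ hθ)⟩)
  rw [Multiset.prod_map_mul] at hlt
  have hconst : ((Gc.roots.map fun _ => Real.sqrt q).prod) = Real.sqrt q ^ G.natDegree := by
    rw [Multiset.map_const', Multiset.prod_replicate, hcard]
  rw [hconst] at hlt
  have hA := abs_eval_eq G hG0 a
  have hB := abs_eval_eq G hG0 b
  rw [hA, hB, ← hGc]
  have hlc : 0 < ‖Gc.leadingCoeff‖ := by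
    rw [norm_pos_iff]
    exact leadingCoeff_ne_zero.mpr hGc0
  have hq0 : (0:ℝ) ≤ q := le_of_lt (lt_trans one_pos hq1)
  have hqle : q ≤ Real.sqrt q ^ G.natDegree := by
    have h1 : Real.sqrt q ^ 2 = q := Real.sq_sqrt hq0
    have h2 : (1:ℝ) ≤ Real.sqrt q := by
      rw [show (1:ℝ) = Real.sqrt 1 by simp]
      exact Real.sqrt_le_sqrt (le_of_lt hq1)
    calc q = Real.sqrt q ^ 2 := h1.symm
      _ ≤ Real.sqrt q ^ G.natDegree := pow_le_pow_right₀ h2 hG2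
  have hAnn : 0 ≤ ((Gc.roots.map fun θ => ‖(a:ℂ) - θ‖).prod) :=
    Multiset.prod_nonneg fun x hx => by
      obtain ⟨θ, hθ, rfl⟩ := Multiset.mem_map.mp hx
      exact norm_nonneg _
  calc q * (‖Gc.leadingCoeff‖ *
        ((Gc.roots.map fun θ => ‖(a:ℂ) - θ‖).prod))
      ≤ Real.sqrt q ^ G.natDegree * (‖Gc.leadingCoeff‖ *
        ((Gc.roots.map fun θ => ‖(a:ℂ) - θ‖).prod)) := by
        exact mul_le_mul_of_nonneg_right hqle (mul_nonneg (le_of_lt hlc) hAnn)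
    _ = ‖Gc.leadingCoeff‖ * (Real.sqrt q ^ G.natDegree *
        ((Gc.roots.map fun θ => ‖(a:ℂ) - θ‖).prod)) := by ring
    _ < ‖Gc.leadingCoeff‖ *
        ((Gc.roots.map fun θ => ‖(b:ℂ) - θ‖).prod) :=
        mul_lt_mul_of_pos_left hlt hlc

theorem stmt4 (f : Polynomial ℤ) (a b : ℤ) (k : ℕ) (hk : 1 ≤ k)
    (ha : f.eval a ≠ 0) (hab : |f.eval a| < |f.eval b|)
    (q : ℝ) (hq : IsQk f a b k q) (hq1 : 1 < q)
    (hnorat : ∀ x : ℚ, aeval x f ≠ 0)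
    (hroots : ∀ θ : ℂ, aeval θ f = 0 →
      Real.sqrt q * ‖(a : ℂ) - θ‖ < ‖(b : ℂ) - θ‖) :
    FactorsAtMost f k := by
  intro g hgdeg heq
  have hf0 : f ≠ 0 := fun h => ha (by simp [h])
  have hb0 : f.eval b ≠ 0 := by
    intro h
    rw [h, abs_zero] at hab
    exact absurd hab (not_lt.mpr (abs_nonneg _))
  obtain ⟨G, hfG, hGdeg⟩ := int_factorization (Nat.succ_ne_zero k) f hf0 g hgdeg heq
  have hfa : f.eval a = ∏ i, (G i).eval a := by rw [hfG, eval_prod]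
  have hfb : f.eval b = ∏ i, (G i).eval b := by rw [hfG, eval_prod]
  have hGa0 : ∀ i, (G i).eval a ≠ 0 := by
    intro i h
    exact ha (by rw [hfa]; exact Finset.prod_eq_zero (Finset.mem_univ i) h)
  have hGb0 : ∀ i, (G i).eval b ≠ 0 := by
    intro i h
    exact hb0 (by rw [hfb]; exact Finset.prod_eq_zero (Finset.mem_univ i) h)
  set r : Fin (k+1) → ℝ :=
    fun i => |(((G i).eval b : ℤ) : ℝ)| / |(((G i).eval a : ℤ) : ℝ)| with hr
  have hrpos : ∀ i, 0 < r i := fun i =>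
    div_pos (abs_pos.mpr (Int.cast_ne_zero.mpr (hGb0 i)))
      (abs_pos.mpr (Int.cast_ne_zero.mpr (hGa0 i)))
  have hprod : ∏ i, r i = |((f.eval b : ℤ) : ℝ)| / |((f.eval a : ℤ) : ℝ)| := by
    rw [hfa, hfb, hr]
    push_cast
    rw [Finset.abs_prod, Finset.abs_prod, Finset.prod_div_distrib]
  obtain ⟨j, hj⟩ := pigeonhole (Nat.succ_ne_zero k) r hrpos
  rw [hprod] at hj
  have hexp : (((k+1 : ℕ) : ℝ))⁻¹ = ((k + 1 : ℝ))⁻¹ := by push_cast; rfl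
  rw [hexp] at hj
  -- f = G j * (rest)
  have hfGH : f = G j * ∏ i ∈ Finset.univ.erase j, G i := by
    rw [hfG, ← Finset.mul_prod_erase _ _ (Finset.mem_univ j)]
  -- degree at least 2
  have hdegpos : 0 < (G j).natDegree := by rw [hGdeg j]; exact hgdeg j
  have hdeg2 : 2 ≤ (G j).natDegree := by
    rcases Nat.lt_or_ge (G j).natDegree 2 with h2 | h2
    · exfalso
      have h1 : (G j).natDegree = 1 := by omega
      have hGj := eq_X_add_C_of_natDegree_le_one (le_of_eq h1)
      have hc1 : (G j).coeff 1 ≠ 0 := by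
        have hGj0 : G j ≠ 0 := by
          intro h
          rw [h, natDegree_zero] at hdegpos
          exact absurd hdegpos (lt_irrefl 0)
        have := leadingCoeff_ne_zero.mpr hGj0
        rwa [leadingCoeff, h1] at this
      set x : ℚ := -(((G j).coeff 0 : ℚ)) / (((G j).coeff 1 : ℚ)) with hx
      apply hnorat x
      have hGx : aeval x (G j) = 0 := by
        conv_lhs => rw [hGj]
        simp only [map_add, map_mul, aeval_C, aeval_X]
        rw [hx]
        have : (((G j).coeff 1 : ℚ)) ≠ 0 := Int.cast_ne_zero.mpr hc1
        field_simp
        simp only [algebraMap_int_eq, eq_intCast]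
        ring
      rw [hfGH, map_mul, hGx, zero_mul]
    · exact h2
  have hlt : q * |(((G j).eval a : ℤ) : ℝ)| < |(((G j).eval b : ℤ) : ℝ)| :=
    root_bound f (G j) a b q hq1 (Dvd.intro _ hfGH.symm) hdeg2 hroots
  have hqlt : q < r j := by
    rw [hr]
    exact (lt_div_iff₀ (abs_pos.mpr (Int.cast_ne_zero.mpr (hGa0 j)))).mpr hlt
  have hmem : r j ∈ {x : ℝ | ∃ d₁ d₂ : ℤ, AdmDiv f a d₁ ∧ AdmDiv f b d₂ ∧
      x = (d₂ : ℝ) / (d₁ : ℝ) ∧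
      x ≤ (|((f.eval b : ℤ) : ℝ)| / |((f.eval a : ℤ) : ℝ)|) ^ ((k + 1 : ℝ))⁻¹} := by
    refine ⟨|(G j).eval a|, |(G j).eval b|,
      admDiv_abs f (G j) _ a hfGH ha, admDiv_abs f (G j) _ b hfGH hb0, ?_, hj⟩
    rw [hr, Int.cast_abs, Int.cast_abs]
  exact absurd (hq.2 hmem) (not_le.mpr hqlt)
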